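/- Let ε > 0 and let K ⊆ ℝ² be a nonempty compact convex set such that a ball of radius ε slides freely inside K. Let u ∈ ℝ² be a unit vector and let z ∈ K satisfy ⟨z,u⟩ = sup_{y ∈ K} ⟨y,u⟩. Then the closed ball of radius ε centred at z − εu is contained in K. -/

import Mathlib

open Pointwise MeasureTheory Metric

noncomputable section

/-- The plane `ℝ²`. -/
abbrev E2 := EuclideanSpace ℝ (Fin 2)

/-- A ball of radius `ε` slides freely inside `K` if every boundary point of `K`
is contained in a closed ball of radius `ε` that is contained in `K`. -/
def SlidesFreely (ε : ℝ) (K : Set E2) : Prop :=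
  ∀ x ∈ frontier K, ∃ c : E2, x ∈ closedBall c ε ∧ closedBall c ε ⊆ K

/-- If a ball of radius `ε` slides freely inside the nonempty compact convex set `K`,
`u` is a unit vector and `z ∈ K` maximizes `⟨·,u⟩` over `K`, then the closed ball of
radius `ε` centred at `z − εu` is contained in `K`. -/
theorem stmt_1 (ε : ℝ) (hε : 0 < ε)
    (K : Set E2) (hKne : K.Nonempty) (hKcomp : IsCompact K) (hKconv : Convex ℝ K)
    (hKslide : SlidesFreely ε K)
    (u : E2) (hu : ‖u‖ = 1)
    (z : E2) (hz : z ∈ K)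
    (hsup : (inner ℝ z u : ℝ) = sSup ((fun y => (inner ℝ y u : ℝ)) '' K)) :
    closedBall (z - ε • u) ε ⊆ K := by
  have hbdd : BddAbove ((fun y => (inner ℝ y u : ℝ)) '' K) :=
    (hKcomp.image (Continuous.inner continuous_id continuous_const)).bddAbove
  have hle : ∀ y ∈ K, (inner ℝ y u : ℝ) ≤ (inner ℝ z u : ℝ) := by
    intro y hy
    rw [hsup]
    exact le_csSup hbdd ⟨y, hy, rfl⟩
  -- z is on the frontier
  have hzf : z ∈ frontier K := by
    rw [← closure_diff_interior]
    refine ⟨subset_closure hz, fun hint => ?_⟩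
    rcases Metric.mem_nhds_iff.mp (mem_interior_iff_mem_nhds.mp hint) with ⟨δ, hδ, hball⟩
    have hy : z + (δ / 2) • u ∈ K := by
      apply hball
      simp only [Metric.mem_ball, dist_eq_norm, add_sub_cancel_left, norm_smul, hu,
        Real.norm_eq_abs, mul_one]
      rw [abs_of_pos (by linarith)]
      linarith
    have := hle _ hy
    rw [inner_add_left, real_inner_smul_left, real_inner_self_eq_norm_sq, hu] at this
    nlinarith
  obtain ⟨c, hzc, hcK⟩ := hKslide z hzf
  have hcball : c + ε • u ∈ closedBall c ε := by
    simp only [Metric.mem_closedBall, dist_eq_norm, add_sub_cancel_left, norm_smul, hu,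
      Real.norm_eq_abs, mul_one, abs_of_pos hε, le_refl]
  have h1 : (inner ℝ (c + ε • u) u : ℝ) ≤ (inner ℝ z u : ℝ) := hle _ (hcK hcball)
  rw [inner_add_left, real_inner_smul_left, real_inner_self_eq_norm_sq, hu] at h1
  have hkey : ε ≤ (inner ℝ (z - c) u : ℝ) := by
    rw [inner_sub_left]; nlinarith
  have hnorm : ‖z - c‖ ≤ ε := by
    rw [Metric.mem_closedBall, dist_eq_norm] at hzc; exact hzc
  have heq : c = z - ε • u := by
    have h2 : ‖(z - c) - ε • u‖ ^ 2 ≤ 0 := by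
      rw [norm_sub_sq_real, norm_smul, real_inner_smul_right, Real.norm_eq_abs,
        abs_of_pos hε, hu]
      nlinarith [mul_le_mul hnorm hnorm (norm_nonneg (z - c)) hε.le, mul_le_mul_of_nonneg_left hkey (by linarith : (0:ℝ) ≤ 2 * ε)]
    have h3 : (z - c) - ε • u = 0 := by
      have := sq_nonneg ‖(z - c) - ε • u‖
      have : ‖(z - c) - ε • u‖ = 0 := by nlinarith
      simpa using this
    have : z - c = ε • u := by linear_combination (norm := abel) h3
    rw [← this]; abel
  rw [← heq]; exact hcK

end
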